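/- Let 𝔤 be a DGLA with central subcomplex 𝔞. The sequence of pointed sets 0 → MC(𝔤)/MC(𝔞) → MC(𝔤/𝔞) → H²(𝔞) is exact: the map MC(𝔤) → MC(𝔤/𝔞) induces an injection MC(𝔤)/MC(𝔞) → MC(𝔤/𝔞) whose image is exactly the preimage of 0 under the obstruction map o₂: MC(𝔤/𝔞) → H²(𝔞). -/

import Mathlib

/-- A (ℤ-graded) differential graded Lie algebra over ℚ: a family of ℚ-modules
`G i`, a degree-1 differential `d` with `d ∘ d = 0`, and a graded bracket
satisfying graded antisymmetry, the graded Leibniz rule and the graded Jacobi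
identity. -/
structure DGLA where
  G : ℤ → Type
  [grp : ∀ i, AddCommGroup (G i)]
  [mod : ∀ i, Module ℚ (G i)]
  d : ∀ i, G i →ₗ[ℚ] G (i + 1)
  bracket : ∀ i j, G i →ₗ[ℚ] G j →ₗ[ℚ] G (i + j)
  d_sq : ∀ i (x : G i), d (i + 1) (d i x) = 0
  antisymm : ∀ i j (x : G i) (y : G j),
    bracket i j x y
      = (-((-1 : ℚ) ^ (i * j))) • cast (congrArg G (add_comm j i)) (bracket j i y x)
  leibniz : ∀ i j (x : G i) (y : G j),
    d (i + j) (bracket i j x y)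
      = cast (congrArg G (by ring : i + 1 + j = i + j + 1)) (bracket (i + 1) j (d i x) y)
        + ((-1 : ℚ) ^ i) •
          cast (congrArg G (by ring : i + (j + 1) = i + j + 1)) (bracket i (j + 1) x (d j y))
  jacobi : ∀ i j k (x : G i) (y : G j) (z : G k),
    cast (congrArg G (by ring : i + (j + k) = i + j + k)) (bracket i (j + k) x (bracket j k y z))
      = bracket (i + j) k (bracket i j x y) z
        + ((-1 : ℚ) ^ (i * j)) •
          cast (congrArg G (by ring : j + (i + k) = i + j + k)) (bracket j (i + k) y (bracket i k x z))

attribute [instance] DGLA.grp DGLA.mod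

/-- Transport along an equality of degrees. -/
def DGLA.cst (𝔤 : DGLA) {i j : ℤ} (h : i = j) (x : 𝔤.G i) : 𝔤.G j :=
  cast (congrArg 𝔤.G h) x

/-- The curvature of a degree-1 element: `F(μ) = δμ + (1/2)[μ,μ]`. -/
def DGLA.curv (𝔤 : DGLA) (μ : 𝔤.G 1) : 𝔤.G 2 :=
  𝔤.d 1 μ + (1/2 : ℚ) • 𝔤.bracket 1 1 μ μ

/-- **Exactness of `0 → MC(𝔤)/MC(𝔞) → MC(𝔤/𝔞) → H²(𝔞)`.** Let `𝔞` be a central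
subcomplex of a DGLA `𝔤`.  (a) Injectivity of `MC(𝔤)/MC(𝔞) → MC(𝔤/𝔞)`: two
Maurer-Cartan elements of `𝔤` with the same image in `𝔤/𝔞` differ by an element
of `MC(𝔞) = Z¹(𝔞)`.  (b) A Maurer-Cartan element `μ + 𝔞¹` of `𝔤/𝔞` (i.e.
`F(μ) ∈ 𝔞²`) lifts to a Maurer-Cartan element of `𝔤` if and only if its
obstruction class `o₂ = [F(μ)] ∈ H²(𝔞)` vanishes, i.e. `F(μ)` is a coboundary
`δα` with `α ∈ 𝔞¹`. -/
theorem MC_central_extension_exact (𝔤 : DGLA)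
    (A1 : Submodule ℚ (𝔤.G 1)) (A2 : Submodule ℚ (𝔤.G 2))
    (hdA : ∀ a ∈ A1, 𝔤.d 1 a ∈ A2)
    (hcentral1 : ∀ a ∈ A1, ∀ j (x : 𝔤.G j), 𝔤.bracket 1 j a x = 0)
    (hcentral1' : ∀ a ∈ A1, ∀ j (x : 𝔤.G j), 𝔤.bracket j 1 x a = 0) :
    (∀ μ μ' : 𝔤.G 1, 𝔤.curv μ = 0 → 𝔤.curv μ' = 0 → μ - μ' ∈ A1 →
      𝔤.d 1 (μ - μ') = 0) ∧
    (∀ μ : 𝔤.G 1, 𝔤.curv μ ∈ A2 →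
      ((∃ α ∈ A1, 𝔤.curv (μ + α) = 0) ↔
        (∃ α ∈ A1, 𝔤.curv μ = 𝔤.cst (by norm_num) (𝔤.d 1 α)))) := by
  have hcst : ∀ (x : 𝔤.G (1+1)) (h : (1:ℤ)+1 = 2), 𝔤.cst h x = x := by
    intro x h
    exact cast_eq _ x
  have key : ∀ (μ α : 𝔤.G 1), α ∈ A1 → 𝔤.curv (μ + α) = 𝔤.curv μ + 𝔤.cst (by norm_num) (𝔤.d 1 α) := by
    intro μ α hα
    have h1 : 𝔤.bracket 1 1 (μ + α) (μ + α) = 𝔤.bracket 1 1 μ μ := by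
      rw [LinearMap.map_add₂, map_add, map_add,
        hcentral1 α hα 1 μ, hcentral1 α hα 1 α, hcentral1' α hα 1 μ]
      abel
    rw [hcst]
    unfold DGLA.curv
    rw [map_add, h1]
    abel
  constructor
  · intro μ μ' h h' hmem
    have hμ : μ' + (μ - μ') = μ := by abel
    have hcurv := key μ' (μ - μ') hmem
    rw [hμ, h, h'] at hcurv
    simpa [hcst] using hcurv.symm
  · intro μ _
    constructor
    · rintro ⟨α, hα, h0⟩
      refine ⟨-α, neg_mem hα, ?_⟩
      rw [key μ α hα] at h0
      rw [hcst]
      have := eq_neg_of_add_eq_zero_left h0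
      rw [this, map_neg, hcst]
    · rintro ⟨α, hα, h0⟩
      refine ⟨-α, neg_mem hα, ?_⟩
      rw [hcst] at h0
      rw [key μ (-α) (neg_mem hα), hcst, h0, map_neg]
      abel
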